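/- Let (V,h,J₋) be a pseudo-Hermitian vector space and let ψ ∈ Λ²V* satisfy ψ(J₋x,J₋y) = -ψ(x,y). Then the tensor Ψ(ψ) defined by Ψ(ψ)(x,y,z,w) := 2h(x,J₋y)ψ(z,J₋w) + 2h(z,J₋w)ψ(x,J₋y) + h(x,J₋z)ψ(y,J₋w) + h(y,J₋w)ψ(x,J₋z) - h(x,J₋w)ψ(y,J₋z) - h(y,J₋z)ψ(x,J₋w) satisfies the first Bianchi identity Ψ(ψ)(x,y,z,w) + Ψ(ψ)(y,z,x,w) + Ψ(ψ)(z,x,y,w) = 0. -/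
import Mathlib


/-- In the setting of the Tricerri–Vanhecke construction (pseudo-
Hermitian `(V,h,J)`, `ψ` alternating with `ψ(Jx,Jy) = -ψ(x,y)`), the tensor `Ψ(ψ)`
satisfies the first Bianchi identity. -/
theorem stmt16 (V : Type*) [AddCommGroup V] [Module ℝ V] [FiniteDimensional ℝ V]
    (h : LinearMap.BilinForm ℝ V) (hsymm : h.IsSymm) (hnd : h.Nondegenerate)
    (J : V →ₗ[ℝ] V) (hJ2 : ∀ x, J (J x) = -x)
    (hJh : ∀ x y, h (J x) (J y) = h x y)
    (ψ : LinearMap.BilinForm ℝ V) (hψ : ψ.IsAlt)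
    (hψJ : ∀ x y, ψ (J x) (J y) = -ψ x y)
    (Ψψ : V → V → V → V → ℝ)
    (hΨ : ∀ x y z w, Ψψ x y z w
      = 2 * h x (J y) * ψ z (J w) + 2 * h z (J w) * ψ x (J y)
        + h x (J z) * ψ y (J w) + h y (J w) * ψ x (J z)
        - h x (J w) * ψ y (J z) - h y (J z) * ψ x (J w)) :
    ∀ x y z w, Ψψ x y z w + Ψψ y z x w + Ψψ z x y w = 0 := by
  have hh : ∀ a b : V, h a (J b) = - h b (J a) := by
    intro a b
    have h1 := hJh a (J b)
    rw [hJ2, map_neg] at h1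
    rw [← h1, ← hsymm.eq]
  have hp : ∀ a b : V, ψ a (J b) = - ψ b (J a) := by
    intro a b
    have h1 := hψJ a (J b)
    rw [hJ2, map_neg] at h1
    have h2 : ψ a (J b) = ψ (J a) b := by linarith [h1]
    rw [h2]
    linarith [hψ.neg_eq (J a) b]
  intro x y z w
  rw [hΨ x y z w, hΨ y z x w, hΨ z x y w, hh y x, hh z x, hh z y,
    hp y x, hp z x, hp z y]
  ring
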